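/- Suppose m_i ≥ k for some index i with 1 ≤ i ≤ n. Then the linear map f_{k,m} : V_{k−1} → V_k is injective and the dimension of its cokernel equals C(n+k−2, k). -/

import Mathlib

open Finsupp

/-- Multiindices `J : Fin n → ℕ` of total degree `j`. -/
abbrev MIdx (n j : ℕ) : Type := {J : Fin n → ℕ // ∑ i, J i = j}

/-- The complex vector space `V_j` with basis `{e_J : |J| = j}`. -/
abbrev V (n j : ℕ) : Type := MIdx n j →₀ ℂ

/-- `J + 1ᵢ` : the multiindex `J` with its `i`-th entry increased by 1. -/
def incr {n : ℕ} (J : Fin n → ℕ) (i : Fin n) : Fin n → ℕ :=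
  Function.update J i (J i + 1)

lemma sum_incr {n : ℕ} (J : Fin n → ℕ) (i : Fin n) :
    ∑ x, incr J i x = (∑ x, J x) + 1 := by
  unfold incr
  rw [Finset.sum_update_of_mem (Finset.mem_univ i),
    Finset.sum_eq_sum_sdiff_singleton_add (Finset.mem_univ i) J]
  ring

/-- The map `f_{j+1,m} : V_j → V_{j+1}`, `e_J ↦ ∑ᵢ (jᵢ+1)(mᵢ−jᵢ) e_{J+1ᵢ}`. -/
noncomputable def fMap (n : ℕ) (m : Fin n → ℕ) (j : ℕ) : V n j →ₗ[ℂ] V n (j + 1) :=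
  Finsupp.lift (V n (j + 1)) ℂ (MIdx n j) fun J =>
    ∑ i, (((J.1 i : ℂ) + 1) * ((m i : ℂ) - (J.1 i : ℂ))) •
      Finsupp.single (⟨incr J.1 i, by rw [sum_incr, J.2]⟩ : MIdx n (j + 1)) (1 : ℂ)

/-- `d(m,j)`: the number of multiindices `J` with `J i ≤ m i` for all `i` and `|J| = j`. -/
noncomputable def dCount (n : ℕ) (m : Fin n → ℕ) (j : ℤ) : ℕ :=
  Set.ncard {J : Fin n → ℕ | (∀ i, J i ≤ m i) ∧ ∑ i, (J i : ℤ) = j}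

/-- `w(m,j) = d(m,j) − d(m,j−1)`. -/
noncomputable def w (n : ℕ) (m : Fin n → ℕ) (j : ℤ) : ℤ :=
  (dCount n m j : ℤ) - (dCount n m (j - 1) : ℤ)

noncomputable instance instFintypeMIdx (n j : ℕ) : Fintype (MIdx n j) :=
  Fintype.ofEquiv _ (Sym.equivNatSumOfFintype (Fin n) j)

instance instFinDimV (n j : ℕ) : FiniteDimensional ℂ (V n j) :=
  Module.Finite.equiv (Finsupp.linearEquivFunOnFinite ℂ ℂ (MIdx n j)).symm

lemma finrank_V (n j : ℕ) : Module.finrank ℂ (V n j) = (n + j - 1).choose j := by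
  rw [(Finsupp.linearEquivFunOnFinite ℂ ℂ (MIdx n j)).finrank_eq,
    Module.finrank_fintype_fun_eq_card,
    ← Fintype.card_congr (Sym.equivNatSumOfFintype (Fin n) j),
    Sym.card_sym_eq_multichoose, Fintype.card_fin, Nat.multichoose_eq]

lemma incr_same {n : ℕ} (J : Fin n → ℕ) (i : Fin n) : incr J i i = J i + 1 := by
  simp [incr]

lemma incr_ne {n : ℕ} (J : Fin n → ℕ) (i x : Fin n) (h : x ≠ i) : incr J i x = J x := by
  simp [incr, Function.update_of_ne h]

lemma fMap_injective (n : ℕ) (m : Fin n → ℕ) (j : ℕ) (i : Fin n) (hm : j < m i) :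
    Function.Injective (fMap n m j) := by
  rw [← LinearMap.ker_eq_bot, LinearMap.ker_eq_bot']
  intro v hv
  by_contra h0
  obtain ⟨J, hJs, hJmax⟩ := v.support.exists_max_image (fun J => J.1 i)
    (Finsupp.support_nonempty_iff.mpr h0)
  set K : MIdx n (j + 1) := ⟨incr J.1 i, by rw [sum_incr, J.2]⟩ with hK
  have hJi : J.1 i ≤ j := by
    have h := Finset.single_le_sum (f := J.1) (fun x _ => Nat.zero_le _) (Finset.mem_univ i)
    rw [J.2] at h; exact h
  have hcoef : (fMap n m j v) K = (((J.1 i : ℂ) + 1) * ((m i : ℂ) - (J.1 i : ℂ))) * v J := by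
    rw [fMap, Finsupp.lift_apply, Finsupp.sum, Finsupp.finset_sum_apply]
    rw [Finset.sum_eq_single_of_mem J hJs]
    · rw [Finsupp.smul_apply, Finsupp.finset_sum_apply,
        Finset.sum_eq_single_of_mem i (Finset.mem_univ i)]
      · rw [Finsupp.smul_apply, Finsupp.single_apply, if_pos rfl]
        simp [smul_eq_mul]; ring
      · intro i' _ hi'
        rw [Finsupp.smul_apply, Finsupp.single_apply, if_neg, smul_zero]
        intro hEq
        have hfun : incr J.1 i' = incr J.1 i := congrArg Subtype.val hEq
        have := congrFun hfun i'
        rw [incr_same, incr_ne _ _ _ hi'] at this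
        omega
    · intro J' hJ' hne
      rw [Finsupp.smul_apply, Finsupp.finset_sum_apply]
      rw [Finset.sum_eq_zero, smul_zero]
      intro i' _
      rw [Finsupp.smul_apply, Finsupp.single_apply, if_neg, smul_zero]
      intro hEq
      have hfun : incr J'.1 i' = incr J.1 i := congrArg Subtype.val hEq
      by_cases hii : i' = i
      · subst hii
        apply hne
        apply Subtype.ext
        funext x
        by_cases hx : x = i'
        · subst hx
          have := congrFun hfun x; rw [incr_same, incr_same] at this; omega
        · have := congrFun hfun x; rwa [incr_ne _ _ _ hx, incr_ne _ _ _ hx] at this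
      · have := congrFun hfun i
        rw [incr_ne _ _ _ (fun h => hii h.symm), incr_same] at this
        have hle := hJmax J' hJ'
        omega
  rw [hv] at hcoef
  simp only [Finsupp.coe_zero, Pi.zero_apply] at hcoef
  have hvJ : v J ≠ 0 := Finsupp.mem_support_iff.mp hJs
  have h1 : ((J.1 i : ℂ) + 1) ≠ 0 := Nat.cast_add_one_ne_zero (J.1 i)
  have h2 : ((m i : ℂ) - (J.1 i : ℂ)) ≠ 0 := by
    rw [sub_ne_zero]
    exact_mod_cast (by omega : m i ≠ J.1 i)
  exact hvJ (by
    rcases mul_eq_zero.mp hcoef.symm with h | h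
    · exact absurd h (mul_ne_zero h1 h2)
    · exact h)


/-- If `m_i ≥ k` for some `i`, then `f_{k,m} : V_{k−1} → V_k` is injective and
`dim coker f_{k,m} = C(n+k−2, k)`. -/
theorem injective_coker_of_big_weight (n k : ℕ) (hn : 1 ≤ n) (hk : 1 ≤ k) (m : Fin n → ℕ)
    (h : ∃ i, k ≤ m i) :
    Function.Injective (fMap n m (k - 1)) ∧
    Module.finrank ℂ (V n (k - 1 + 1) ⧸ LinearMap.range (fMap n m (k - 1)))
      = Nat.choose (n + k - 2) k := by
  obtain ⟨i, hi⟩ := h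
  have hinj : Function.Injective (fMap n m (k - 1)) :=
    fMap_injective n m (k - 1) i (by omega)
  refine ⟨hinj, ?_⟩
  obtain ⟨a, rfl⟩ : ∃ a, k = a + 1 := ⟨k - 1, by omega⟩
  have hq := Submodule.finrank_quotient_add_finrank (LinearMap.range (fMap n m a))
  rw [LinearMap.finrank_range_of_inj (by simpa using hinj), finrank_V, finrank_V] at hq
  have hpascal := Nat.choose_succ_succ (n + a - 1) a
  simp only [Nat.succ_eq_add_one] at hpascal
  have e1 : n + a - 1 + 1 = n + (a + 1) - 1 := by omega
  have e2 : n + a - 1 = n + (a + 1) - 2 := by omega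
  rw [e1, e2] at hpascal
  rw [e2] at hq
  show Module.finrank ℂ (V n (a + 1) ⧸ LinearMap.range (fMap n m a)) = _
  omega
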